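/- Let v : S¹ → ℂ be continuous with |v(z)| = 1 for all z ∈ S¹, and let t ≥ 1 be such that 1/2 is not in the spectrum of the self-adjoint operator e(u_t, M_v). Let χ be the characteristic function of [1/2, ∞), so that χ(e(u_t, M_v)) is a well-defined projection given by continuous functional calculus. Then the difference χ(e(u_t, M_v)) − [[1, 0], [0, 0]] is a compact operator on L²(S¹) ⊕ L²(S¹). -/

import Mathlib

open Complex Real Filter MeasureTheory AddCircle ContinuousLinearMap

instance : Fact ((0 : ℝ) < 1) := ⟨one_pos⟩

/-- `L²(S¹)`, realized as the `L²` space of the circle `ℝ/ℤ` with its normalized Haar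
measure; the Fourier orthonormal basis is `(fourierLp 2 n)_{n ∈ ℤ}`. -/
noncomputable abbrev L2Circle : Type := Lp ℂ 2 (@haarAddCircle 1 _)

/-- The block operator `[[A, B], [C, D]]` on `L²(S¹) ⊕ L²(S¹)`. -/
noncomputable def blockOp (A B C D : L2Circle →L[ℂ] L2Circle) :
    WithLp 2 (L2Circle × L2Circle) →L[ℂ] WithLp 2 (L2Circle × L2Circle) :=
  (WithLp.prodContinuousLinearEquiv 2 ℂ L2Circle L2Circle).symm.toContinuousLinearMap ∘L
    (((A ∘L fst ℂ L2Circle L2Circle) + (B ∘L snd ℂ L2Circle L2Circle)).prod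
      ((C ∘L fst ℂ L2Circle L2Circle) + (D ∘L snd ℂ L2Circle L2Circle))) ∘L
    (WithLp.prodContinuousLinearEquiv 2 ℂ L2Circle L2Circle).toContinuousLinearMap

/-- The Loring element `e(u_t, M_v)` of the pair of unitaries `(u_t, M_v)`. -/
noncomputable def loringOp (f g h : ℂ → ℝ) (Ut M : L2Circle →L[ℂ] L2Circle) :
    WithLp 2 (L2Circle × L2Circle) →L[ℂ] WithLp 2 (L2Circle × L2Circle) :=
  blockOp (cfc (fun z : ℂ => (f z : ℂ)) Ut)
    (cfc (fun z : ℂ => (g z : ℂ)) Ut + cfc (fun z : ℂ => (h z : ℂ)) Ut * M)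
    (star M * cfc (fun z : ℂ => (h z : ℂ)) Ut + cfc (fun z : ℂ => (g z : ℂ)) Ut)
    (1 - cfc (fun z : ℂ => (f z : ℂ)) Ut)

noncomputable instance : ContinuousFunctionalCalculus ℝ
    (WithLp 2 (L2Circle × L2Circle) →L[ℂ] WithLp 2 (L2Circle × L2Circle)) IsSelfAdjoint :=
  @IsSelfAdjoint.instContinuousFunctionalCalculus
    (WithLp 2 (L2Circle × L2Circle) →L[ℂ] WithLp 2 (L2Circle × L2Circle)) _ _ _ _ _

/-! ### Auxiliary material for the proof -/

open Polynomial
open scoped InnerProductSpace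

set_option linter.unusedSectionVars false
set_option maxHeartbeats 1000000
set_option synthInstance.maxHeartbeats 400000

section CompactHelpers

variable {E F G : Type*} [NormedAddCommGroup E] [NormedSpace ℂ E]
  [NormedAddCommGroup F] [NormedSpace ℂ F] [NormedAddCommGroup G] [NormedSpace ℂ G]

lemma IsCompactOperator.prodMk {f : E → F} {g : E → G} (hf : IsCompactOperator f)
    (hg : IsCompactOperator g) : IsCompactOperator (fun x => (f x, g x)) := by
  obtain ⟨K₁, hK₁, hK₁f⟩ := hf
  obtain ⟨K₂, hK₂, hK₂g⟩ := hg
  refine ⟨K₁ ×ˢ K₂, hK₁.prod hK₂, ?_⟩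
  have : (fun x => (f x, g x)) ⁻¹' (K₁ ×ˢ K₂) = f ⁻¹' K₁ ∩ g ⁻¹' K₂ := rfl
  rw [this]
  exact Filter.inter_mem hK₁f hK₂g

lemma ccf_add {X Y : E →L[ℂ] F} (hX : IsCompactOperator ⇑X) (hY : IsCompactOperator ⇑Y) :
    IsCompactOperator ⇑(X + Y) := by
  rw [ContinuousLinearMap.coe_add']; exact hX.add hY

lemma ccf_neg {X : E →L[ℂ] F} (hX : IsCompactOperator ⇑X) : IsCompactOperator ⇑(-X) := by
  rw [ContinuousLinearMap.coe_neg']; exact hX.neg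

lemma ccf_csmul (c : ℂ) {X : E →L[ℂ] F} (hX : IsCompactOperator ⇑X) :
    IsCompactOperator ⇑(c • X) := by
  rw [ContinuousLinearMap.coe_smul']; exact hX.smul c

lemma ccf_rsmul (c : ℝ) {X : E →L[ℂ] F} (hX : IsCompactOperator ⇑X) :
    IsCompactOperator ⇑(c • X) := by
  rw [ContinuousLinearMap.coe_smul']; exact hX.smul c

lemma ccf_sum {ι : Type*} (s : Finset ι) (f : ι → E →L[ℂ] F)
    (h : ∀ i ∈ s, IsCompactOperator ⇑(f i)) : IsCompactOperator ⇑(∑ i ∈ s, f i) := by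
  classical
  induction s using Finset.induction_on with
  | empty => simpa using isCompactOperator_zero
  | insert _ _ hx ih =>
    rw [Finset.sum_insert hx]
    exact ccf_add (h _ (Finset.mem_insert_self _ _))
      (ih fun i hi => h i (Finset.mem_insert_of_mem hi))

lemma ccf_mul_left (A : E →L[ℂ] E) {X : E →L[ℂ] E} (hX : IsCompactOperator ⇑X) :
    IsCompactOperator ⇑(A * X) :=
  hX.clm_comp A

lemma ccf_mul_right {X : E →L[ℂ] E} (hX : IsCompactOperator ⇑X) (A : E →L[ℂ] E) :
    IsCompactOperator ⇑(X * A) :=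
  hX.comp_clm A

lemma ccf_rankOne (φ : E →L[ℂ] ℂ) (w : F) : IsCompactOperator ⇑(φ.smulRight w) := by
  have hφ : IsCompactOperator ⇑φ := by
    refine ⟨Metric.closedBall 0 ‖φ‖, isCompact_closedBall _ _, ?_⟩
    refine Filter.mem_of_superset (Metric.closedBall_mem_nhds (0 : E) one_pos) ?_
    intro x hx
    simp only [Set.mem_preimage, Metric.mem_closedBall, dist_zero_right] at *
    calc ‖φ x‖ ≤ ‖φ‖ * ‖x‖ := φ.le_opNorm x
    _ ≤ ‖φ‖ * 1 := by gcongr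
    _ = ‖φ‖ := mul_one _
  have : ⇑(φ.smulRight w) = (fun c : ℂ => c • w) ∘ ⇑φ := rfl
  rw [this]
  exact hφ.continuous_comp (continuous_id.smul continuous_const)

end CompactHelpers

section SpectralHelpers

variable {E : Type*} [NormedAddCommGroup E] [InnerProductSpace ℂ E] [CompleteSpace E]

lemma ccf_pow_sub (a b : E →L[ℂ] E) (hab : IsCompactOperator ⇑(a - b)) (n : ℕ) :
    IsCompactOperator ⇑(a ^ n - b ^ n) := by
  induction n with
  | zero => simpa using isCompactOperator_zero
  | succ n ih =>
    have key : a ^ (n + 1) - b ^ (n + 1) = a * (a ^ n - b ^ n) + (a - b) * b ^ n := by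
      rw [mul_sub, sub_mul, pow_succ', pow_succ']
      abel
    rw [key]
    exact ccf_add (ccf_mul_left a ih) (ccf_mul_right hab _)

lemma ccf_aeval_sub (a b : E →L[ℂ] E) (hab : IsCompactOperator ⇑(a - b)) (p : ℝ[X]) :
    IsCompactOperator ⇑(aeval a p - aeval b p) := by
  rw [Polynomial.aeval_eq_sum_range (x := a), Polynomial.aeval_eq_sum_range (x := b),
    ← Finset.sum_sub_distrib]
  refine ccf_sum _ _ fun i _ => ?_
  rw [← smul_sub]
  exact ccf_rsmul _ (ccf_pow_sub a b hab i)

lemma ccf_cfc_sub (a b : E →L[ℂ] E) (ha : IsSelfAdjoint a) (hb : IsSelfAdjoint b)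
    (hab : IsCompactOperator ⇑(a - b)) (ρ : ℝ → ℝ) (hρ : Continuous ρ) :
    IsCompactOperator ⇑(cfc ρ a - cfc ρ b) := by
  have hmem : (cfc ρ a - cfc ρ b) ∈ closure {X : E →L[ℂ] E | IsCompactOperator ⇑X} := by
    rw [Metric.mem_closure_iff]
    intro ε hε
    set c : ℝ := ‖a‖ * ‖(1 : E →L[ℂ] E)‖ + ‖b‖ * ‖(1 : E →L[ℂ] E)‖ with hc
    have hc0 : 0 ≤ c := by positivity
    have hsa : spectrum ℝ a ⊆ Set.Icc (-c) c := fun x hx => by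
      have := spectrum.norm_le_norm_mul_of_mem hx
      rw [Real.norm_eq_abs, abs_le] at this
      constructor <;> nlinarith [norm_nonneg b, norm_nonneg (1 : E →L[ℂ] E)]
    have hsb : spectrum ℝ b ⊆ Set.Icc (-c) c := fun x hx => by
      have := spectrum.norm_le_norm_mul_of_mem hx
      rw [Real.norm_eq_abs, abs_le] at this
      constructor <;> nlinarith [norm_nonneg a, norm_nonneg (1 : E →L[ℂ] E)]
    obtain ⟨p, hp⟩ := exists_polynomial_near_of_continuousOn (-c) c ρ
      hρ.continuousOn (ε / 3) (by positivity)
    refine ⟨aeval a p - aeval b p, ccf_aeval_sub a b hab p, ?_⟩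
    rw [dist_eq_norm]
    have key : cfc ρ a - cfc ρ b - (aeval a p - aeval b p)
        = (cfc ρ a - cfc (fun x => p.eval x) a) - (cfc ρ b - cfc (fun x => p.eval x) b) := by
      rw [cfc_polynomial p a ha, cfc_polynomial p b hb]
      abel
    have bound : ∀ (x : E →L[ℂ] E), IsSelfAdjoint x → spectrum ℝ x ⊆ Set.Icc (-c) c →
        ‖cfc ρ x - cfc (fun y => p.eval y) x‖ ≤ ε / 3 := by
      intro x hx hs
      rw [← cfc_sub ρ (fun y : ℝ => p.eval y) x hρ.continuousOn (by fun_prop)]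
      refine norm_cfc_le (by positivity) fun y hy => ?_
      have := hp y (hs hy)
      rw [Real.norm_eq_abs]
      rw [abs_sub_comm] at this
      linarith [this]
    calc ‖cfc ρ a - cfc ρ b - (aeval a p - aeval b p)‖
        ≤ ‖cfc ρ a - cfc (fun x => p.eval x) a‖ + ‖cfc ρ b - cfc (fun x => p.eval x) b‖ := by
          rw [key]; exact norm_sub_le _ _
      _ ≤ ε / 3 + ε / 3 := add_le_add (bound a ha hsa) (bound b hb hsb)
      _ < ε := by linarith
  rwa [isClosed_setOf_isCompactOperator.closure_eq] at hmem

end SpectralHelpers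

section Proj

variable {E : Type*} [NormedAddCommGroup E] [InnerProductSpace ℂ E] [CompleteSpace E]

lemma spectrum_idem (P : E →L[ℂ] E) (hP : P * P = P) : spectrum ℝ P ⊆ {0, 1} := by
  intro μ hμ
  by_contra hn
  simp only [Set.mem_insert_iff, Set.mem_singleton_iff, not_or] at hn
  obtain ⟨hμ0, hμ1⟩ := hn
  have hμ1' : μ - 1 ≠ 0 := sub_ne_zero.mpr hμ1
  rw [spectrum.mem_iff] at hμ
  apply hμ
  rw [Algebra.algebraMap_eq_smul_one]
  have expand : ∀ x y : ℝ, (μ • (1 : E →L[ℂ] E) - P) * (x • 1 + y • P)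
      = (μ * x) • 1 + (μ * y - x - y) • P := by
    intro x y
    simp only [sub_mul, mul_add, smul_mul_assoc, mul_smul_comm, one_mul, mul_one, smul_smul, hP]
    module
  have expand' : ∀ x y : ℝ, (x • 1 + y • P) * (μ • (1 : E →L[ℂ] E) - P)
      = (μ * x) • 1 + (μ * y - x - y) • P := by
    intro x y
    simp only [add_mul, mul_sub, smul_mul_assoc, mul_smul_comm, one_mul, mul_one, smul_smul, hP]
    have : x * μ = μ * x := mul_comm _ _
    module
  have hxy : μ * μ⁻¹ = 1 := mul_inv_cancel₀ hμ0
  have hxy2 : μ * (μ⁻¹ * (μ - 1)⁻¹) - μ⁻¹ - μ⁻¹ * (μ - 1)⁻¹ = 0 := by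
    field_simp
    ring
  refine ⟨⟨μ • (1 : E →L[ℂ] E) - P, μ⁻¹ • 1 + (μ⁻¹ * (μ - 1)⁻¹) • P, ?_, ?_⟩, rfl⟩
  · rw [expand, hxy, hxy2]; simp
  · rw [expand', hxy, hxy2]; simp

lemma ccf_spectral_proj (a P : E →L[ℂ] E) (ha : IsSelfAdjoint a) (hP : IsSelfAdjoint P)
    (hP2 : P * P = P) (haP : IsCompactOperator ⇑(a - P))
    (hs : (1 / 2 : ℝ) ∉ spectrum ℝ a) :
    IsCompactOperator ⇑(cfc (fun x : ℝ => if 1 / 2 ≤ x then (1 : ℝ) else 0) a - P) := by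
  obtain ⟨δ, hδ0, hball⟩ := Metric.isOpen_iff.mp (spectrum.isClosed (𝕜 := ℝ) a).isOpen_compl _ hs
  set d : ℝ := min (δ / 2) (1 / 4) with hd
  have hd0 : 0 < d := lt_min (by linarith) (by norm_num)
  have hd4 : d ≤ 1 / 4 := min_le_right _ _
  have hdδ : d < δ := lt_of_le_of_lt (min_le_left _ _) (by linarith)
  set ρ : ℝ → ℝ := fun x => min 1 (max 0 ((x - (1 / 2 - d)) / d)) with hρ
  have hρc : Continuous ρ := by
    apply continuous_const.min
    exact continuous_const.max ((continuous_id.sub continuous_const).div_const d)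
  have hρ_ge : ∀ x : ℝ, 1 / 2 ≤ x → ρ x = 1 := by
    intro x hx
    have : (1 : ℝ) ≤ (x - (1 / 2 - d)) / d := (le_div_iff₀ hd0).mpr (by linarith)
    simp only [hρ]
    rw [max_eq_right (by linarith), min_eq_left this]
  have hρ_le : ∀ x : ℝ, x ≤ 1 / 2 - d → ρ x = 0 := by
    intro x hx
    have hnum : (x - (1 / 2 - d)) / d ≤ 0 := div_nonpos_of_nonpos_of_nonneg (by linarith) hd0.le
    simp only [hρ]
    rw [max_eq_left hnum, min_eq_right zero_le_one]
  have h1 : cfc (fun x : ℝ => if 1 / 2 ≤ x then (1 : ℝ) else 0) a = cfc ρ a := by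
    apply cfc_congr
    intro x hx
    by_cases hx2 : 1 / 2 ≤ x
    · simp only [if_pos hx2, hρ_ge x hx2]
    · have hxs : x ∉ Metric.ball (1 / 2 : ℝ) δ := fun hmem => (hball hmem) hx
      rw [Metric.mem_ball, Real.dist_eq, not_lt, abs_sub_comm,
        _root_.abs_of_nonneg (by linarith [not_le.mp hx2])] at hxs
      simp only [if_neg hx2, hρ_le x (by linarith)]
  have h2 : cfc ρ P = P := by
    have : cfc ρ P = cfc (id : ℝ → ℝ) P := by
      apply cfc_congr
      intro x hx
      rcases spectrum_idem P hP2 hx with hx0 | hx1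
      · rw [hx0, hρ_le 0 (by linarith)]; rfl
      · rw [Set.mem_singleton_iff] at hx1
        rw [hx1, hρ_ge 1 (by norm_num)]; rfl
    rw [this, cfc_id ℝ P hP]
  rw [h1, ← h2]
  exact ccf_cfc_sub a P ha hP haP ρ hρc

end Proj

section SW

variable {E : Type*} [NormedAddCommGroup E] [InnerProductSpace ℂ E] [CompleteSpace E]

lemma ccf_cfc_unitary (u : E →L[ℂ] E) (hu : u ∈ unitary (E →L[ℂ] E))
    (h1 : (1 : ℂ) ∈ spectrum ℂ u) (hc : IsCompactOperator ⇑(u - 1))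
    (φ : ℂ → ℂ) (hφ : ContinuousOn φ (spectrum ℂ u)) :
    IsCompactOperator ⇑(cfc φ u - φ 1 • 1) := by
  obtain ⟨hu1, hu2⟩ := Unitary.mem_iff.mp hu
  have hnormal : IsStarNormal u := ⟨by rw [Commute, SemiconjBy, hu1, hu2]⟩
  have hstaru : IsCompactOperator ⇑(star u - 1) := by
    have key : star u - 1 = star u * -(u - 1) := by
      rw [neg_sub, mul_sub, mul_one, hu1]
    rw [key]
    exact ccf_mul_left (star u) (ccf_neg hc)
  have hCS : CompactSpace (spectrum ℂ u) := isCompact_iff_compactSpace.mp (spectrum.isCompact u)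
  set pt : spectrum ℂ u := ⟨1, h1⟩
  set D : C(spectrum ℂ u, ℂ) → (E →L[ℂ] E) := fun ψ => cfcHom hnormal ψ - ψ pt • 1 with hD
  have key_mul : ∀ ψ₁ ψ₂ : C(spectrum ℂ u, ℂ), IsCompactOperator ⇑(D ψ₁) →
      IsCompactOperator ⇑(D ψ₂) → IsCompactOperator ⇑(D (ψ₁ * ψ₂)) := by
    intro ψ₁ ψ₂ hψ₁ hψ₂
    have key : D (ψ₁ * ψ₂) = cfcHom hnormal ψ₁ * D ψ₂ + ψ₂ pt • D ψ₁ := by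
      simp only [hD, map_mul, ContinuousMap.mul_apply, mul_sub, smul_sub, mul_smul_comm,
        mul_one, smul_smul]
      module
    rw [key]
    exact ccf_add (ccf_mul_left _ hψ₂) (ccf_csmul _ hψ₁)
  have key_add : ∀ ψ₁ ψ₂ : C(spectrum ℂ u, ℂ), IsCompactOperator ⇑(D ψ₁) →
      IsCompactOperator ⇑(D ψ₂) → IsCompactOperator ⇑(D (ψ₁ + ψ₂)) := by
    intro ψ₁ ψ₂ hψ₁ hψ₂
    have key : D (ψ₁ + ψ₂) = D ψ₁ + D ψ₂ := by
      simp only [hD, map_add, ContinuousMap.add_apply, add_smul]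
      module
    rw [key]
    exact ccf_add hψ₁ hψ₂
  have key_alg : ∀ z : ℂ, IsCompactOperator ⇑(D (algebraMap ℂ C(spectrum ℂ u, ℂ) z)) := by
    intro z
    have key : D (algebraMap ℂ C(spectrum ℂ u, ℂ) z) = 0 := by
      simp only [hD, AlgHomClass.commutes, Algebra.algebraMap_eq_smul_one,
        ContinuousMap.smul_apply, ContinuousMap.one_apply, smul_eq_mul, mul_one]
      simp
    rw [key]
    simpa using isCompactOperator_zero
  set S : StarSubalgebra ℂ C(spectrum ℂ u, ℂ) :=
    { carrier := {ψ | IsCompactOperator ⇑(D ψ) ∧ IsCompactOperator ⇑(D (star ψ))},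
      mul_mem' := fun {ψ₁ ψ₂} h₁ h₂ => ⟨key_mul _ _ h₁.1 h₂.1, by
        rw [star_mul']
        exact key_mul _ _ h₁.2 h₂.2⟩,
      add_mem' := fun {ψ₁ ψ₂} h₁ h₂ => ⟨key_add _ _ h₁.1 h₂.1, by
        rw [star_add]
        exact key_add _ _ h₁.2 h₂.2⟩,
      algebraMap_mem' := fun z => ⟨key_alg z, by
        rw [← algebraMap_star_comm]
        exact key_alg _⟩,
      star_mem' := fun {ψ} h => ⟨h.2, by rw [star_star]; exact h.1⟩ } with hS
  have hDcont : Continuous D := by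
    apply Continuous.sub (cfcHom_continuous hnormal)
    exact (continuous_eval_const pt : Continuous fun ψ : C(spectrum ℂ u, ℂ) => ψ pt).smul continuous_const
  have hclosed : IsClosed (S : Set C(spectrum ℂ u, ℂ)) := by
    have h1c : IsClosed {ψ : C(spectrum ℂ u, ℂ) | IsCompactOperator ⇑(D ψ)} :=
      isClosed_setOf_isCompactOperator.preimage hDcont
    exact h1c.inter (h1c.preimage continuous_star)
  set Xmap : C(spectrum ℂ u, ℂ) := (ContinuousMap.id ℂ).restrict (spectrum ℂ u) with hX
  have hXmem : Xmap ∈ S := by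
    have e1 : D Xmap = u - 1 := by
      rw [hD]
      simp only [cfcHom_id hnormal]
      norm_num [hX]
      exact cfcHom_id hnormal
    have e2 : D (star Xmap) = star u - 1 := by
      rw [hD]
      simp only [map_star, cfcHom_id hnormal]
      norm_num [hX]
      exact cfcHom_id hnormal
    exact ⟨e1 ▸ hc, e2 ▸ hstaru⟩
  have hsep : S.SeparatesPoints := by
    intro x y hxy
    exact ⟨Xmap, ⟨Xmap, hXmem, rfl⟩, fun h => hxy (Subtype.ext h)⟩
  have htop := ContinuousMap.starSubalgebra_topologicalClosure_eq_top_of_separatesPoints S hsep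
  have hmem : ∀ ψ : C(spectrum ℂ u, ℂ), ψ ∈ S := by
    intro ψ
    have h' : ψ ∈ closure (S : Set C(spectrum ℂ u, ℂ)) := by
      have : ψ ∈ S.topologicalClosure := by rw [htop]; trivial
      exact this
    rwa [hclosed.closure_eq] at h'
  have := (hmem ⟨_, hφ.restrict⟩).1
  rw [cfc_apply φ u hnormal hφ]
  exact this

end SW

section Diagonal

variable {E : Type*} [NormedAddCommGroup E] [InnerProductSpace ℂ E] [CompleteSpace E]

lemma hb_ext {F : Type*} [NormedAddCommGroup F] [NormedSpace ℂ F]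
    (b : HilbertBasis ℤ ℂ E) {A B : E →L[ℂ] F} (h : ∀ n, A (b n) = B (b n)) : A = B :=
  ContinuousLinearMap.ext_on
    (Submodule.dense_iff_topologicalClosure_eq_top.mpr b.dense_span)
    (by rintro x ⟨n, rfl⟩; exact h n)

lemma diag_unitary_compact (b : HilbertBasis ℤ ℂ E) (U : E →L[ℂ] E) (lam : ℤ → ℂ)
    (hlam : ∀ n, star (lam n) * lam n = 1)
    (hU : ∀ n, U (b n) = lam n • b n) (F : Finset ℤ) (hF : ∀ n, n ∉ F → lam n = 1) :
    U ∈ unitary (E →L[ℂ] E) ∧ IsCompactOperator ⇑(U - 1) ∧ (1 : ℂ) ∈ spectrum ℂ U := by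
  classical
  have hbo : ∀ i j : ℤ, ⟪b i, b j⟫_ℂ = if i = j then 1 else 0 :=
    orthonormal_iff_ite.mp b.orthonormal
  have hstar : ∀ n, (star U) (b n) = star (lam n) • b n := by
    intro n
    have key : innerSL ℂ (b n) ∘L U = lam n • innerSL ℂ (b n) := by
      apply hb_ext b
      intro m
      simp only [ContinuousLinearMap.comp_apply, innerSL_apply_apply, hU m, inner_smul_right,
        ContinuousLinearMap.smul_apply, smul_eq_mul, hbo]
      by_cases hmn : n = m
      · subst hmn; simp
      · simp [hmn]
    refine ext_inner_left ℂ (fun v => ?_)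
    rw [ContinuousLinearMap.star_eq_adjoint, ContinuousLinearMap.adjoint_inner_right]
    have h2 : ⟪b n, U v⟫_ℂ = lam n * ⟪b n, v⟫_ℂ := by
      have := DFunLike.congr_fun key v
      simpa only [ContinuousLinearMap.comp_apply, innerSL_apply_apply,
        ContinuousLinearMap.smul_apply, smul_eq_mul] using this
    calc ⟪U v, b n⟫_ℂ = starRingEnd ℂ ⟪b n, U v⟫_ℂ := (inner_conj_symm _ _).symm
      _ = starRingEnd ℂ (lam n * ⟪b n, v⟫_ℂ) := by rw [h2]
      _ = star (lam n) * starRingEnd ℂ ⟪b n, v⟫_ℂ := by rw [map_mul]; rfl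
      _ = star (lam n) * ⟪v, b n⟫_ℂ := by rw [inner_conj_symm]
      _ = ⟪v, star (lam n) • b n⟫_ℂ := (inner_smul_right _ _ _).symm
  have hmul1 : star U * U = 1 := by
    apply hb_ext b
    intro n
    rw [ContinuousLinearMap.mul_apply, hU n, ContinuousLinearMap.map_smul, hstar n, smul_smul,
      mul_comm, hlam n, one_smul, ContinuousLinearMap.one_apply]
  have hmul2 : U * star U = 1 := by
    apply hb_ext b
    intro n
    rw [ContinuousLinearMap.mul_apply, hstar n, ContinuousLinearMap.map_smul, hU n, smul_smul,
      hlam n, one_smul, ContinuousLinearMap.one_apply]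
  have hcomp : IsCompactOperator ⇑(U - 1) := by
    have hUT : U - 1 = ∑ n ∈ F, (lam n - 1) • ((innerSL ℂ (b n)).smulRight (b n)) := by
      apply hb_ext b
      intro m
      rw [ContinuousLinearMap.sub_apply, ContinuousLinearMap.one_apply, hU m,
        ContinuousLinearMap.sum_apply]
      simp only [ContinuousLinearMap.smul_apply, ContinuousLinearMap.smulRight_apply,
        innerSL_apply_apply, hbo]
      by_cases hm : m ∈ F
      · rw [Finset.sum_eq_single m]
        · simp [sub_smul]
        · intro n _ hnm
          simp [hnm]
        · intro h; exact absurd hm h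
      · rw [Finset.sum_eq_zero, hF m hm, one_smul, sub_self]
        intro n hn
        have hnm : n ≠ m := fun h => hm (h ▸ hn)
        simp [hnm]
    rw [hUT]
    exact ccf_sum _ _ (fun n _ => ccf_csmul _ (ccf_rankOne _ _))
  refine ⟨Unitary.mem_iff.mpr ⟨hmul1, hmul2⟩, hcomp, ?_⟩
  obtain ⟨n₀, hn₀⟩ := F.exists_notMem
  have hbne : b n₀ ≠ 0 := fun h => by
    have h1 := b.orthonormal.1 n₀
    rw [h, norm_zero] at h1
    exact zero_ne_one h1
  rw [spectrum.mem_iff]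
  intro hunit
  rw [map_one] at hunit
  obtain ⟨V, hV⟩ := hunit.exists_left_inv
  have := DFunLike.congr_fun hV (b n₀)
  rw [ContinuousLinearMap.mul_apply, ContinuousLinearMap.one_apply,
    ContinuousLinearMap.sub_apply, ContinuousLinearMap.one_apply, hU n₀, hF n₀ hn₀,
    one_smul, sub_self, map_zero] at this
  exact hbne this.symm

end Diagonal

section BlockOpLemmas

lemma blockOp_sub (A B C D A' B' C' D' : L2Circle →L[ℂ] L2Circle) :
    blockOp A B C D - blockOp A' B' C' D' =
      blockOp (A - A') (B - B') (C - C') (D - D') := by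
  ext x
  simp only [blockOp, ContinuousLinearMap.sub_apply, ContinuousLinearMap.coe_comp',
    Function.comp_apply, ContinuousLinearEquiv.coe_coe, ContinuousLinearMap.prod_apply,
    ContinuousLinearMap.add_apply, ContinuousLinearMap.coe_fst', ContinuousLinearMap.coe_snd']
  rw [← map_sub]
  congr 1
  simp only [Prod.mk_sub_mk, Prod.mk.injEq]
  constructor <;> abel

lemma blockOp_compact {A B C D : L2Circle →L[ℂ] L2Circle} (hA : IsCompactOperator ⇑A)
    (hB : IsCompactOperator ⇑B) (hC : IsCompactOperator ⇑C) (hD : IsCompactOperator ⇑D) :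
    IsCompactOperator ⇑(blockOp A B C D) := by
  have h1 : IsCompactOperator ⇑((A ∘L fst ℂ L2Circle L2Circle) + (B ∘L snd ℂ L2Circle L2Circle)) :=
    ccf_add (by rw [ContinuousLinearMap.coe_comp']
                exact hA.comp_clm _)
            (by rw [ContinuousLinearMap.coe_comp']
                exact hB.comp_clm _)
  have h2 : IsCompactOperator ⇑((C ∘L fst ℂ L2Circle L2Circle) + (D ∘L snd ℂ L2Circle L2Circle)) :=
    ccf_add (by rw [ContinuousLinearMap.coe_comp']
                exact hC.comp_clm _)
            (by rw [ContinuousLinearMap.coe_comp']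
                exact hD.comp_clm _)
  have hmid : IsCompactOperator
      ⇑(((A ∘L fst ℂ L2Circle L2Circle) + (B ∘L snd ℂ L2Circle L2Circle)).prod
        ((C ∘L fst ℂ L2Circle L2Circle) + (D ∘L snd ℂ L2Circle L2Circle))) := by
    have := h1.prodMk h2
    exact this
  have := (hmid.comp_clm
      (WithLp.prodContinuousLinearEquiv 2 ℂ L2Circle L2Circle).toContinuousLinearMap).continuous_comp
      (WithLp.prodContinuousLinearEquiv 2 ℂ L2Circle L2Circle).symm.toContinuousLinearMap.continuous
  exact this

lemma blockOp_one_apply (x : WithLp 2 (L2Circle × L2Circle)) :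
    blockOp 1 0 0 0 x =
      (WithLp.prodContinuousLinearEquiv 2 ℂ L2Circle L2Circle).symm (x.fst, 0) := by
  simp only [blockOp, ContinuousLinearMap.coe_comp', Function.comp_apply,
    ContinuousLinearEquiv.coe_coe, ContinuousLinearMap.prod_apply, ContinuousLinearMap.add_apply,
    ContinuousLinearMap.comp_apply, ContinuousLinearMap.one_apply, ContinuousLinearMap.zero_apply,
    ContinuousLinearMap.coe_fst', ContinuousLinearMap.coe_snd', add_zero, zero_add]
  rfl

lemma blockOp_P_idem : blockOp 1 0 0 0 * blockOp 1 0 0 0 = blockOp (1 : L2Circle →L[ℂ] L2Circle) 0 0 0 := by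
  ext x
  rw [ContinuousLinearMap.mul_apply, blockOp_one_apply, blockOp_one_apply]
  rfl

lemma blockOp_P_sa : IsSelfAdjoint (blockOp (1 : L2Circle →L[ℂ] L2Circle) 0 0 0) := by
  rw [ContinuousLinearMap.isSelfAdjoint_iff_isSymmetric]
  intro x y
  show ⟪blockOp 1 0 0 0 x, y⟫_ℂ = ⟪x, blockOp 1 0 0 0 y⟫_ℂ
  rw [blockOp_one_apply, blockOp_one_apply, WithLp.prod_inner_apply, WithLp.prod_inner_apply]
  simp

end BlockOpLemmas


/-- If `1/2` is not in the spectrum of the self-adjoint operator `e(u_t, M_v)` and `χ` is the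
characteristic function of `[1/2, ∞)`, then `χ(e(u_t, M_v)) - [[1,0],[0,0]]` is a compact
operator on `L²(S¹) ⊕ L²(S¹)`. -/
theorem loring_operator_spectral_projection_compact
    (f g h : ℂ → ℝ)
    (hf : ContinuousOn f (Metric.sphere (0 : ℂ) 1))
    (hg : ContinuousOn g (Metric.sphere (0 : ℂ) 1))
    (hh : ContinuousOn h (Metric.sphere (0 : ℂ) 1))
    (hrange : ∀ z : ℂ, ‖z‖ = 1 →
      f z ∈ Set.Icc (0 : ℝ) 1 ∧ g z ∈ Set.Icc (0 : ℝ) 1 ∧ h z ∈ Set.Icc (0 : ℝ) 1)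
    (hsum : ∀ z : ℂ, ‖z‖ = 1 → (f z) ^ 2 + (g z) ^ 2 + (h z) ^ 2 = f z)
    (hgh : ∀ z : ℂ, ‖z‖ = 1 → g z * h z = 0)
    (hf1 : f 1 = 1) (hg1 : g 1 = 0) (hh1 : h 1 = 0)
    (v : AddCircle (1 : ℝ) → ℂ) (hv : Continuous v) (hv1 : ∀ x, ‖v x‖ = 1)
    (M : L2Circle →L[ℂ] L2Circle)
    (hM : ∀ ξ : L2Circle, (⇑(M ξ)) =ᵐ[@haarAddCircle 1 _] fun x => v x * ξ x)
    (t : ℝ) (ht : 1 ≤ t)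
    (Ut : L2Circle →L[ℂ] L2Circle)
    (hU : ∀ n : ℤ,
      Ut (fourierLp 2 n) =
        (if 0 ≤ n ∧ (n : ℝ) ≤ t then Complex.exp (2 * Real.pi * Complex.I * n / t) else 1) •
          fourierLp 2 n)
    (hsa : IsSelfAdjoint (loringOp f g h Ut M))
    (hspec : (1 / 2 : ℝ) ∉ spectrum ℝ (loringOp f g h Ut M)) :
    IsCompactOperator
      (cfc (fun x : ℝ => if 1 / 2 ≤ x then (1 : ℝ) else 0) (loringOp f g h Ut M) -
        blockOp 1 0 0 0) := by
  classical
  set b : HilbertBasis ℤ ℂ L2Circle := @fourierBasis 1 ⟨one_pos⟩ with hbdef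
  have hbcoe : ∀ n : ℤ, b n = fourierLp 2 n := fun n => by
    rw [hbdef]
    exact congrFun coe_fourierBasis n
  set lam : ℤ → ℂ := fun n =>
    if 0 ≤ n ∧ (n : ℝ) ≤ t then Complex.exp (2 * Real.pi * Complex.I * n / t) else 1 with hlamdef
  have hUb : ∀ n, Ut (b n) = lam n • b n := fun n => by rw [hbcoe n]; exact hU n
  have hlamu : ∀ n, star (lam n) * lam n = 1 := by
    intro n
    by_cases hn : 0 ≤ n ∧ (n : ℝ) ≤ t
    · simp only [hlamdef, if_pos hn]
      rw [Complex.star_def, ← Complex.exp_conj, ← Complex.exp_add]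
      have hconj : (starRingEnd ℂ) (2 * (Real.pi : ℂ) * Complex.I * (n : ℂ) / (t : ℂ))
          = -(2 * (Real.pi : ℂ) * Complex.I * (n : ℂ) / (t : ℂ)) := by
        rw [map_div₀]
        simp only [map_mul, Complex.conj_I, Complex.conj_ofReal, map_ofNat, map_intCast]
        ring
      rw [hconj, neg_add_cancel, Complex.exp_zero]
    · simp only [hlamdef, if_neg hn, star_one, one_mul]
  have hFoff : ∀ n : ℤ, n ∉ Finset.Icc (0 : ℤ) ⌊t⌋ → lam n = 1 := by
    intro n hn
    rw [Finset.mem_Icc] at hn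
    have hcond : ¬(0 ≤ n ∧ (n : ℝ) ≤ t) := by
      rintro ⟨h1, h2⟩
      exact hn ⟨h1, Int.le_floor.mpr h2⟩
    simp only [hlamdef, if_neg hcond]
  obtain ⟨hunit, hUtc, h1s⟩ := diag_unitary_compact b Ut lam hlamu hUb _ hFoff
  have hsub : spectrum ℂ Ut ⊆ Metric.sphere (0 : ℂ) 1 :=
    spectrum.subset_circle_of_unitary hunit
  have hFc : IsCompactOperator ⇑(cfc (fun z : ℂ => (f z : ℂ)) Ut - 1) := by
    have : IsCompactOperator
        ⇑(cfc (fun z : ℂ => ((f z : ℝ) : ℂ)) Ut - ((f 1 : ℝ) : ℂ) • 1) :=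
      ccf_cfc_unitary Ut hunit h1s hUtc (fun z : ℂ => ((f z : ℝ) : ℂ))
        (Complex.continuous_ofReal.comp_continuousOn (hf.mono hsub))
    rwa [hf1, Complex.ofReal_one, one_smul] at this
  have hGc : IsCompactOperator ⇑(cfc (fun z : ℂ => (g z : ℂ)) Ut) := by
    have : IsCompactOperator
        ⇑(cfc (fun z : ℂ => ((g z : ℝ) : ℂ)) Ut - ((g 1 : ℝ) : ℂ) • 1) :=
      ccf_cfc_unitary Ut hunit h1s hUtc (fun z : ℂ => ((g z : ℝ) : ℂ))
        (Complex.continuous_ofReal.comp_continuousOn (hg.mono hsub))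
    rwa [hg1, Complex.ofReal_zero, zero_smul, sub_zero] at this
  have hHc : IsCompactOperator ⇑(cfc (fun z : ℂ => (h z : ℂ)) Ut) := by
    have : IsCompactOperator
        ⇑(cfc (fun z : ℂ => ((h z : ℝ) : ℂ)) Ut - ((h 1 : ℝ) : ℂ) • 1) :=
      ccf_cfc_unitary Ut hunit h1s hUtc (fun z : ℂ => ((h z : ℝ) : ℂ))
        (Complex.continuous_ofReal.comp_continuousOn (hh.mono hsub))
    rwa [hh1, Complex.ofReal_zero, zero_smul, sub_zero] at this
  have hloringP : IsCompactOperator ⇑(loringOp f g h Ut M - blockOp 1 0 0 0) := by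
    unfold loringOp
    rw [blockOp_sub]
    apply blockOp_compact
    · exact hFc
    · rw [sub_zero]
      refine ccf_add hGc ?_
      rw [show (cfc (fun z : ℂ => (h z : ℂ)) Ut) * M
            = (cfc (fun z : ℂ => (h z : ℂ)) Ut) ∘L M from rfl,
        ContinuousLinearMap.coe_comp']
      exact hHc.comp_clm M
    · rw [sub_zero]
      refine ccf_add ?_ hGc
      rw [show (star M) * (cfc (fun z : ℂ => (h z : ℂ)) Ut)
            = (star M) ∘L (cfc (fun z : ℂ => (h z : ℂ)) Ut) from rfl,
        ContinuousLinearMap.coe_comp']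
      exact hHc.clm_comp (star M)
    · rw [sub_zero, show (1 : L2Circle →L[ℂ] L2Circle) - cfc (fun z : ℂ => (f z : ℂ)) Ut
            = -(cfc (fun z : ℂ => (f z : ℂ)) Ut - 1) from (neg_sub _ _).symm]
      exact ccf_neg hFc
  exact ccf_spectral_proj (loringOp f g h Ut M) (blockOp 1 0 0 0) hsa blockOp_P_sa
    blockOp_P_idem hloringP hspec
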